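/- Let ρ > 0 with ρ ∉ ⋃_p { p/log p, (p²−p)/log p, (p³−p²)/log p, … } (union over primes p). Then there is a unique positive integer N minimizing ℓ(M) − ρ log M over all positive integers M, and N = ∏_{p : p/log p < ρ} p^{α_p}, where α_p = 1 if p/log p < ρ ≤ (p²−p)/log p and α_p = i if (p^i − p^{i−1})/log p < ρ ≤ (p^{i+1} − p^i)/log p for i ≥ 2. -/

import Mathlib

/-- ℓ(M): the sum of the prime powers in the standard factorization of M. -/
def ell (M : ℕ) : ℕ := ∑ p ∈ M.primeFactors, p ^ M.factorization p



open Finset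

namespace Superchampion

/-- increment of the ℓ-contribution of prime p when exponent goes a → a+1 -/
noncomputable def cc (p a : ℕ) : ℝ := if a = 0 then (p:ℝ) else (p:ℝ)^(a+1) - (p:ℝ)^a

/-- ℓ-contribution of prime p with exponent a -/
noncomputable def LL (p a : ℕ) : ℝ := if a = 0 then 0 else (p:ℝ)^a

noncomputable def gg (ρ : ℝ) (p a : ℕ) : ℝ := LL p a - ρ * a * Real.log p

lemma LL_succ (p a : ℕ) : LL p (a+1) = LL p a + cc p a := by
  cases a with
  | zero => simp [LL, cc]
  | succ n => simp [LL, cc]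

lemma gg_eq_sum (ρ : ℝ) (p a : ℕ) :
    gg ρ p a = ∑ j ∈ range a, (cc p j - ρ * Real.log p) := by
  induction a with
  | zero => simp [gg, LL]
  | succ n ih =>
      rw [sum_range_succ, ← ih]
      simp only [gg, LL_succ]
      push_cast
      ring

lemma two_le_cast {p : ℕ} (hp : p.Prime) : (2:ℝ) ≤ (p:ℝ) := by
  exact_mod_cast hp.two_le

lemma pow_le_cc {p : ℕ} (hp : p.Prime) (a : ℕ) : (p:ℝ)^a ≤ cc p a := by
  have h2 := two_le_cast hp
  cases a with
  | zero =>
      show (p:ℝ)^0 ≤ cc p 0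
      rw [show cc p 0 = (p:ℝ) from if_pos rfl, pow_zero]
      linarith
  | succ n =>
      simp only [cc, Nat.succ_ne_zero, if_false]
      have hpos : (0:ℝ) < (p:ℝ)^(n+1) := by positivity
      have : (p:ℝ)^(n+1+1) = (p:ℝ)^(n+1) * p := by ring
      rw [this]
      nlinarith

lemma cc_mono {p : ℕ} (hp : p.Prime) : Monotone (cc p) := by
  have h2 := two_le_cast hp
  apply monotone_nat_of_le_succ
  intro a
  cases a with
  | zero =>
      show cc p 0 ≤ cc p 1
      rw [show cc p 0 = (p:ℝ) from if_pos rfl,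
        show cc p 1 = (p:ℝ)^(0+1+1) - (p:ℝ)^(0+1) from if_neg one_ne_zero]
      have e : (p:ℝ)^(0+1+1) = (p:ℝ) * p := by ring
      have e2 : (p:ℝ)^(0+1) = (p:ℝ) := by ring
      rw [e, e2]
      nlinarith [mul_self_nonneg ((p:ℝ)-2)]
  | succ n =>
      simp only [cc, Nat.succ_ne_zero, if_false]
      have hpos : (0:ℝ) < (p:ℝ)^(n+1) := by positivity
      have e1 : (p:ℝ)^(n+1+1) = (p:ℝ)^(n+1) * p := by ring
      have e2 : (p:ℝ)^(n+1+1+1) = (p:ℝ)^(n+1) * p * p := by ring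
      rw [e1, e2]
      nlinarith [mul_nonneg hpos.le (sq_nonneg ((p:ℝ)-1))]

lemma exists_cc {p : ℕ} (hp : p.Prime) (ρ : ℝ) :
    ∃ a, ρ * Real.log p ≤ cc p a := by
  refine ⟨⌈ρ * Real.log p⌉₊, ?_⟩
  have h1 : ρ * Real.log p ≤ (⌈ρ * Real.log p⌉₊ : ℝ) := Nat.le_ceil _
  refine h1.trans ?_
  set a := ⌈ρ * Real.log p⌉₊
  have h2 : (a:ℝ) ≤ (2:ℝ)^a := by
    exact_mod_cast (Nat.lt_two_pow_self (n := a)).le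
  have h3 : (2:ℝ)^a ≤ (p:ℝ)^a := by
    exact pow_le_pow_left₀ (by norm_num) (two_le_cast hp) a
  exact h2.trans (h3.trans (pow_le_cc hp a))

open Classical in
noncomputable def alpha (ρ : ℝ) (p : ℕ) : ℕ :=
  if h : ∃ a, ρ * Real.log p ≤ cc p a then Nat.find h else 0

open Classical in
lemma alpha_spec {p : ℕ} (hp : p.Prime) (ρ : ℝ) :
    ρ * Real.log p ≤ cc p (alpha ρ p) := by
  rw [alpha, dif_pos (exists_cc hp ρ)]
  exact Nat.find_spec (exists_cc hp ρ)

open Classical in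
lemma alpha_min {p : ℕ} (hp : p.Prime) (ρ : ℝ) {j : ℕ} (hj : j < alpha ρ p) :
    cc p j < ρ * Real.log p := by
  rw [alpha, dif_pos (exists_cc hp ρ)] at hj
  exact lt_of_not_ge (Nat.find_min (exists_cc hp ρ) hj)

open Classical in
lemma le_alpha_iff {p : ℕ} (hp : p.Prime) (ρ : ℝ) {i : ℕ} (hi : 1 ≤ i) :
    i ≤ alpha ρ p ↔ cc p (i-1) < ρ * Real.log p := by
  constructor
  · intro h
    exact alpha_min hp ρ (by omega)
  · intro h
    rw [alpha, dif_pos (exists_cc hp ρ)]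
    have : i - 1 < Nat.find (exists_cc hp ρ) := by
      rw [Nat.lt_find_iff]
      intro m hm
      exact not_le_of_gt (lt_of_le_of_lt (cc_mono hp hm) h)
    omega


lemma log_pos' {p : ℕ} (hp : p.Prime) : 0 < Real.log p :=
  Real.log_pos (by exact_mod_cast hp.one_lt)

lemma cc_ne {p : ℕ} (hp : p.Prime) {ρ : ℝ}
    (h1 : ρ ≠ (p : ℝ) / Real.log p)
    (h2 : ∀ i : ℕ, 1 ≤ i → ρ ≠ ((p : ℝ) ^ (i + 1) - (p : ℝ) ^ i) / Real.log p)
    (a : ℕ) : ρ * Real.log p ≠ cc p a := by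
  have hl := log_pos' hp
  intro h
  cases a with
  | zero =>
      apply h1
      rw [eq_div_iff hl.ne']
      simpa [cc] using h
  | succ n =>
      apply h2 (n+1) (by omega)
      rw [eq_div_iff hl.ne']
      simpa [cc] using h

lemma alpha_spec_strict {p : ℕ} (hp : p.Prime) {ρ : ℝ}
    (h1 : ρ ≠ (p : ℝ) / Real.log p)
    (h2 : ∀ i : ℕ, 1 ≤ i → ρ ≠ ((p : ℝ) ^ (i + 1) - (p : ℝ) ^ i) / Real.log p) :
    ρ * Real.log p < cc p (alpha ρ p) :=
  lt_of_le_of_ne (alpha_spec hp ρ) (cc_ne hp h1 h2 _)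

/-- strict minimality of gg at alpha -/
lemma gg_lt {p : ℕ} (hp : p.Prime) {ρ : ℝ}
    (hstrict : ρ * Real.log p < cc p (alpha ρ p)) {a : ℕ} (ha : a ≠ alpha ρ p) :
    gg ρ p (alpha ρ p) < gg ρ p a := by
  set α := alpha ρ p with hα
  rcases lt_or_gt_of_ne ha with h | h
  · -- a < α : gg α = gg a + ∑_{Ico a α} d, sum negative
    have key : gg ρ p a + ∑ j ∈ Ico a α, (cc p j - ρ * Real.log p) = gg ρ p α := by
      rw [gg_eq_sum, gg_eq_sum, range_eq_Ico, range_eq_Ico]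
      exact sum_Ico_consecutive _ (Nat.zero_le a) h.le
    have hneg : ∑ j ∈ Ico a α, (cc p j - ρ * Real.log p) < 0 := by
      apply sum_neg
      · intro j hj
        rw [mem_Ico] at hj
        have := alpha_min hp ρ hj.2
        linarith
      · exact ⟨a, mem_Ico.mpr ⟨le_refl a, h⟩⟩
    linarith
  · -- α < a
    have key : gg ρ p α + ∑ j ∈ Ico α a, (cc p j - ρ * Real.log p) = gg ρ p a := by
      rw [gg_eq_sum, gg_eq_sum, range_eq_Ico, range_eq_Ico]
      exact sum_Ico_consecutive _ (Nat.zero_le α) h.le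
    have hpos : 0 < ∑ j ∈ Ico α a, (cc p j - ρ * Real.log p) := by
      apply sum_pos
      · intro j hj
        rw [mem_Ico] at hj
        have := cc_mono hp hj.1
        linarith
      · exact ⟨α, mem_Ico.mpr ⟨le_refl α, h⟩⟩
    linarith

lemma gg_le {p : ℕ} (hp : p.Prime) {ρ : ℝ}
    (hstrict : ρ * Real.log p < cc p (alpha ρ p)) (a : ℕ) :
    gg ρ p (alpha ρ p) ≤ gg ρ p a := by
  rcases eq_or_ne a (alpha ρ p) with h | h
  · rw [h]
  · exact (gg_lt hp hstrict h).le

open Classical in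
lemma alpha_eq_zero {p : ℕ} (hp : p.Prime) {ρ : ℝ} (hρ : 0 < ρ)
    (hpB : (⌈4*ρ^2⌉₊ + 1 : ℕ) ≤ p) : alpha ρ p = 0 := by
  have h0 : ρ * Real.log p ≤ cc p 0 := by
    rw [show cc p 0 = (p:ℝ) from if_pos rfl]
    have hp0 : (0:ℝ) < (p:ℝ) := by exact_mod_cast hp.pos
    have hs : Real.sqrt p ^ 2 = (p:ℝ) := Real.sq_sqrt hp0.le
    have hs0 : 0 < Real.sqrt p := Real.sqrt_pos.mpr hp0
    have hlog : Real.log p ≤ 2 * Real.sqrt p := by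
      have := Real.log_le_sub_one_of_pos hs0
      have hls : Real.log (Real.sqrt p) = Real.log p / 2 := Real.log_sqrt hp0.le
      rw [hls] at this
      linarith
    have h4 : 4 * ρ^2 ≤ (p:ℝ) := by
      have : (4*ρ^2 : ℝ) ≤ (⌈4*ρ^2⌉₊ : ℕ) := Nat.le_ceil _
      have hc : ((⌈4*ρ^2⌉₊ : ℕ) : ℝ) ≤ (p:ℝ) := by exact_mod_cast le_trans (Nat.le_succ _) hpB
      linarith
    have h2ρ : 2 * ρ ≤ Real.sqrt p := by nlinarith
    calc ρ * Real.log p ≤ ρ * (2 * Real.sqrt p) := by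
          apply mul_le_mul_of_nonneg_left hlog hρ.le
      _ ≤ Real.sqrt p * Real.sqrt p := by nlinarith
      _ = (p:ℝ) := by nlinarith
  rw [alpha, dif_pos (exists_cc hp ρ), Nat.find_eq_zero]
  exact h0

noncomputable def NN (ρ : ℝ) : ℕ :=
  ∏ p ∈ (range (⌈4*ρ^2⌉₊ + 1)).filter Nat.Prime, p ^ alpha ρ p

lemma NN_pos (ρ : ℝ) : 0 < NN ρ := by
  apply prod_pos
  intro p hp
  exact pow_pos (mem_filter.mp hp).2.pos _

lemma NN_factorization (ρ : ℝ) (hρ : 0 < ρ) {q : ℕ} (hq : q.Prime) :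
    (NN ρ).factorization q = alpha ρ q := by
  classical
  set P := (range (⌈4*ρ^2⌉₊ + 1)).filter Nat.Prime with hP
  have hne : ∀ p ∈ P, p ^ alpha ρ p ≠ 0 := fun p hp =>
    pow_ne_zero _ (mem_filter.mp hp).2.pos.ne'
  have h1 : (NN ρ).factorization = ∑ p ∈ P, (p ^ alpha ρ p).factorization :=
    Nat.factorization_prod hne
  have h2 : (NN ρ).factorization q = ∑ p ∈ P, (p ^ alpha ρ p).factorization q := by
    rw [h1, Finsupp.finset_sum_apply]
  rw [h2]
  have h3 : ∀ p ∈ P, (p ^ alpha ρ p).factorization q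
      = if p = q then alpha ρ p else 0 := by
    intro p hp
    rw [(mem_filter.mp hp).2.factorization_pow, Finsupp.single_apply]
  rw [sum_congr rfl h3, Finset.sum_ite_eq' P q (fun p => alpha ρ p)]
  by_cases hqP : q ∈ P
  · rw [if_pos hqP]
  · rw [if_neg hqP]
    have : ¬ q < ⌈4*ρ^2⌉₊ + 1 := by
      intro hlt
      exact hqP (mem_filter.mpr ⟨mem_range.mpr hlt, hq⟩)
    exact (alpha_eq_zero hq hρ (by omega)).symm

lemma gg_of_zero (ρ : ℝ) (p : ℕ) : gg ρ p 0 = 0 := by simp [gg, LL]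

lemma F_eq (ρ : ℝ) {M : ℕ} (hM : M ≠ 0) {S : Finset ℕ} (hS : M.primeFactors ⊆ S) :
    (ell M : ℝ) - ρ * Real.log M = ∑ p ∈ S, gg ρ p (M.factorization p) := by
  have hstep : ∑ p ∈ S, gg ρ p (M.factorization p)
      = ∑ p ∈ M.primeFactors, gg ρ p (M.factorization p) := by
    apply (sum_subset hS ?_).symm
    intro p _ hp
    have h0 : M.factorization p = 0 := by
      rw [← Nat.support_factorization] at hp
      exact Finsupp.notMem_support_iff.mp hp
    rw [h0, gg_of_zero]
  rw [hstep]
  have hprod : ∏ p ∈ M.primeFactors, p ^ M.factorization p = M := by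
    rw [← Nat.support_factorization]
    exact Nat.factorization_prod_pow_eq_self hM
  have hlog : Real.log M = ∑ p ∈ M.primeFactors, (M.factorization p : ℝ) * Real.log p := by
    conv_lhs => rw [← hprod]
    push_cast
    rw [Real.log_prod]
    · exact sum_congr rfl fun p _ => Real.log_pow _ _
    · intro p hp
      have := (Nat.prime_of_mem_primeFactors hp).pos
      positivity
  have hell : (ell M : ℝ) = ∑ p ∈ M.primeFactors, LL p (M.factorization p) := by
    rw [ell]
    push_cast
    apply sum_congr rfl
    intro p hp
    have h0 : M.factorization p ≠ 0 := by
      rw [← Nat.support_factorization] at hp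
      exact Finsupp.mem_support_iff.mp hp
    rw [LL, if_neg h0]
  rw [hell, hlog, mul_sum, ← sum_sub_distrib]
  apply sum_congr rfl
  intro p _
  rw [gg]
  ring

end Superchampion


open Finset Superchampion in
theorem unique_superchampion (ρ : ℝ) (hρ : 0 < ρ)
    (hE : ∀ p : ℕ, p.Prime → ρ ≠ (p : ℝ) / Real.log p ∧
      ∀ i : ℕ, 1 ≤ i → ρ ≠ ((p : ℝ) ^ (i + 1) - (p : ℝ) ^ i) / Real.log p) :
    ∃ N : ℕ, 0 < N ∧
      (∀ M : ℕ, 0 < M →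
        (ell N : ℝ) - ρ * Real.log N ≤ (ell M : ℝ) - ρ * Real.log M) ∧
      (∀ M : ℕ, 0 < M →
        (∀ K : ℕ, 0 < K →
          (ell M : ℝ) - ρ * Real.log M ≤ (ell K : ℝ) - ρ * Real.log K) → M = N) ∧
      (∀ p : ℕ, p.Prime →
        (1 ≤ N.factorization p ↔ (p : ℝ) / Real.log p < ρ) ∧
        (∀ i : ℕ, 2 ≤ i →
          (i ≤ N.factorization p ↔
            ((p : ℝ) ^ i - (p : ℝ) ^ (i - 1)) / Real.log p < ρ))) := by
  classical
  set N := NN ρ with hN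
  have hNpos := NN_pos ρ
  have hNfact : ∀ q : ℕ, q.Prime → N.factorization q = alpha ρ q :=
    fun q hq => NN_factorization ρ hρ hq
  have hstrict : ∀ p : ℕ, p.Prime → ρ * Real.log p < cc p (alpha ρ p) :=
    fun p hp => alpha_spec_strict hp (hE p hp).1 (hE p hp).2
  have main : ∀ M : ℕ, 0 < M → M ≠ N →
      (ell N : ℝ) - ρ * Real.log N < (ell M : ℝ) - ρ * Real.log M := by
    intro M hM hMN
    set S := M.primeFactors ∪ N.primeFactors with hS
    have hSub1 : M.primeFactors ⊆ S := subset_union_left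
    have hSub2 : N.primeFactors ⊆ S := subset_union_right
    have hFM := F_eq ρ hM.ne' hSub1
    have hFN := F_eq ρ hNpos.ne' hSub2
    have hprimeS : ∀ p ∈ S, p.Prime := by
      intro p hp
      rcases mem_union.mp hp with h | h <;> exact Nat.prime_of_mem_primeFactors h
    have hFN' : (ell N : ℝ) - ρ * Real.log N = ∑ p ∈ S, gg ρ p (alpha ρ p) := by
      rw [hFN]
      exact sum_congr rfl fun p hp => by rw [hNfact p (hprimeS p hp)]
    rw [hFM, hFN']
    obtain ⟨q, hq, hqne⟩ : ∃ q ∈ S, M.factorization q ≠ alpha ρ q := by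
      by_contra h
      push_neg at h
      apply hMN
      apply Nat.factorization_inj (Set.mem_setOf.mpr hM.ne') (Set.mem_setOf.mpr hNpos.ne')
      ext q
      by_cases hqp : q.Prime
      · by_cases hqS : q ∈ S
        · rw [h q hqS, hNfact q hqp]
        · have h1 : M.factorization q = 0 := by
            have : q ∉ M.primeFactors := fun hc => hqS (hSub1 hc)
            rw [← Nat.support_factorization] at this
            exact Finsupp.notMem_support_iff.mp this
          have h2 : N.factorization q = 0 := by
            have : q ∉ N.primeFactors := fun hc => hqS (hSub2 hc)
            rw [← Nat.support_factorization] at this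
            exact Finsupp.notMem_support_iff.mp this
          rw [h1, h2]
      · rw [Nat.factorization_eq_zero_of_not_prime _ hqp,
          Nat.factorization_eq_zero_of_not_prime _ hqp]
    apply sum_lt_sum
    · intro p hp
      exact gg_le (hprimeS p hp) (hstrict p (hprimeS p hp)) _
    · exact ⟨q, hq, gg_lt (hprimeS q hq) (hstrict q (hprimeS q hq)) hqne⟩
  refine ⟨N, hNpos, ?_, ?_, ?_⟩
  · intro M hM
    rcases eq_or_ne M N with h | h
    · rw [h]
    · exact (main M hM h).le
  · intro M hM hmin
    by_contra h
    have h1 := main M hM h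
    have h2 := hmin N hNpos
    linarith
  · intro p hp
    have hl := log_pos' hp
    rw [hNfact p hp]
    constructor
    · rw [le_alpha_iff hp ρ le_rfl,
        show cc p (1-1) = (p:ℝ) from if_pos rfl, div_lt_iff₀ hl]
    · intro i hi
      rw [le_alpha_iff hp ρ (by omega), div_lt_iff₀ hl]
      have e : cc p (i-1) = (p:ℝ)^i - (p:ℝ)^(i-1) := by
        rw [cc, if_neg (by omega), show i - 1 + 1 = i from by omega]
      rw [e]
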